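/- The infimum over (w, V) ∈ F of the total transmit power ‖w‖² + Tr(V) equals the infimum over (W̄, V̄, ξ) ∈ F' of 1/ξ. In particular, every (w, V) ∈ F satisfies ‖w‖² + Tr(V) > 0 and, setting ξ₀ = 1/(‖w‖² + Tr(V)), the point (ξ₀ w wᴴ, ξ₀ V, ξ₀) belongs to F' with objective value 1/ξ₀ = ‖w‖² + Tr(V); conversely, every (W̄, V̄, ξ) ∈ F' has ξ > 0 and, writing W̄/ξ = w̄ w̄ᴴ for some w̄ ∈ ℂ^{N_T} (possible since W̄ is positive semidefinite of rank one), the pair (w̄, V̄/ξ) belongs to F with ‖w̄‖² + Tr(V̄/ξ) = 1/ξ. -/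

import Mathlib

open Matrix
open scoped ComplexOrder

/-- The original feasible set `F`: pairs `(w, V)` with `V` Hermitian PSD satisfying the
SINR constraint C1 of the desired receiver, the robust eavesdropper constraints C2 and C3,
and the power constraint C4. -/
def FeasOrig {NT K J : ℕ} (h : Fin NT → ℂ)
    (ghat : Fin (K - 1) → Fin NT → ℂ) (lhat : Fin J → Fin NT → ℂ)
    (Γreq σz2 Pmax σPU2 : ℝ) (Γtol σzk2 ε : Fin (K - 1) → ℝ) (ΓtolPU υ : Fin J → ℝ)
    (w : Fin NT → ℂ) (V : Matrix (Fin NT) (Fin NT) ℂ) : Prop :=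
  V.PosSemidef ∧
  Γreq * ((Matrix.vecMulVec h (star h) * V).trace.re + σz2) ≤
      (star w ⬝ᵥ Matrix.vecMulVec h (star h) *ᵥ w).re ∧
  (∀ k, ∀ Δg : Fin NT → ℂ, (star Δg ⬝ᵥ Δg).re ≤ ε k ^ 2 →
      ‖star (ghat k + Δg) ⬝ᵥ w‖ ^ 2 ≤
        Γtol k * ((star (ghat k + Δg) ⬝ᵥ V *ᵥ (ghat k + Δg)).re + σzk2 k)) ∧
  (∀ j, ∀ Δl : Fin NT → ℂ, (star Δl ⬝ᵥ Δl).re ≤ υ j ^ 2 →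
      ‖star (lhat j + Δl) ⬝ᵥ w‖ ^ 2 ≤
        ΓtolPU j * ((star (lhat j + Δl) ⬝ᵥ V *ᵥ (lhat j + Δl)).re + σPU2)) ∧
  (star w ⬝ᵥ w).re + V.trace.re ≤ Pmax

/-- The Charnes–Cooper transformed feasible set `F'`: triples `(W̄, V̄, ξ)` with `W̄, V̄`
Hermitian PSD, `ξ ≥ 0`, `rank W̄ = 1`, the transformed constraints, the transformed power
constraint, and the normalization `Tr(W̄) + Tr(V̄) = 1`. -/
def FeasTrans {NT K J : ℕ} (h : Fin NT → ℂ)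
    (ghat : Fin (K - 1) → Fin NT → ℂ) (lhat : Fin J → Fin NT → ℂ)
    (Γreq σz2 Pmax σPU2 : ℝ) (Γtol σzk2 ε : Fin (K - 1) → ℝ) (ΓtolPU υ : Fin J → ℝ)
    (Wb Vb : Matrix (Fin NT) (Fin NT) ℂ) (ξ : ℝ) : Prop :=
  Wb.PosSemidef ∧ Vb.PosSemidef ∧ 0 ≤ ξ ∧ Wb.rank = 1 ∧
  Γreq * ((Matrix.vecMulVec h (star h) * Vb).trace.re + σz2 * ξ) ≤
      (Matrix.vecMulVec h (star h) * Wb).trace.re ∧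
  (∀ k, ∀ Δg : Fin NT → ℂ, (star Δg ⬝ᵥ Δg).re ≤ ε k ^ 2 →
      (star (ghat k + Δg) ⬝ᵥ Wb *ᵥ (ghat k + Δg)).re ≤
        Γtol k * ((star (ghat k + Δg) ⬝ᵥ Vb *ᵥ (ghat k + Δg)).re + σzk2 k * ξ)) ∧
  (∀ j, ∀ Δl : Fin NT → ℂ, (star Δl ⬝ᵥ Δl).re ≤ υ j ^ 2 →
      (star (lhat j + Δl) ⬝ᵥ Wb *ᵥ (lhat j + Δl)).re ≤
        ΓtolPU j * ((star (lhat j + Δl) ⬝ᵥ Vb *ᵥ (lhat j + Δl)).re + σPU2 * ξ)) ∧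
  Wb.trace.re + Vb.trace.re ≤ Pmax * ξ ∧
  Wb.trace.re + Vb.trace.re = 1


namespace CCaux
variable {n : ℕ}

lemma vecMulVec_mulVec (w v g : Fin n → ℂ) :
    (vecMulVec w v) *ᵥ g = (v ⬝ᵥ g) • w := by
  ext i
  simp only [mulVec, dotProduct, vecMulVec_apply, Pi.smul_apply, smul_eq_mul, Finset.sum_mul]
  exact Finset.sum_congr rfl fun j _ => by ring

lemma quad_vecMulVec (w g : Fin n → ℂ) :
    star g ⬝ᵥ (vecMulVec w (star w)) *ᵥ g = (star g ⬝ᵥ w) * star (star g ⬝ᵥ w) := by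
  rw [vecMulVec_mulVec, dotProduct_smul, smul_eq_mul]
  rw [star_dotProduct w g]; ring

lemma quad_vecMulVec_re (w g : Fin n → ℂ) :
    (star g ⬝ᵥ (vecMulVec w (star w)) *ᵥ g).re = ‖star g ⬝ᵥ w‖ ^ 2 := by
  rw [quad_vecMulVec, Complex.star_def, Complex.mul_conj, Complex.sq_norm, Complex.ofReal_re]

lemma trace_vecMulVec_mul (h : Fin n → ℂ) (M : Matrix (Fin n) (Fin n) ℂ) :
    (vecMulVec h (star h) * M).trace = star h ⬝ᵥ M *ᵥ h := by
  simp only [trace, diag, Matrix.mul_apply, vecMulVec_apply, dotProduct, mulVec, Finset.mul_sum]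
  rw [Finset.sum_comm]
  exact Finset.sum_congr rfl fun j _ => Finset.sum_congr rfl fun i _ => by simp; ring

lemma trace_vecMulVec (w : Fin n → ℂ) :
    (vecMulVec w (star w)).trace = star w ⬝ᵥ w := by
  simp only [trace, diag, vecMulVec_apply, dotProduct]
  exact Finset.sum_congr rfl fun i _ => by simp [mul_comm]

lemma posSemidef_vecMulVec (w : Fin n → ℂ) : (vecMulVec w (star w)).PosSemidef := by
  refine PosSemidef.of_dotProduct_mulVec_nonneg ?_ (fun x => ?_)
  · ext i j
    simp [conjTranspose_apply, vecMulVec_apply, mul_comm]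
  · rw [quad_vecMulVec]
    exact mul_star_self_nonneg _

lemma smul_posSemidef {c : ℝ} (hc : 0 ≤ c) {M : Matrix (Fin n) (Fin n) ℂ}
    (hM : M.PosSemidef) : ((c : ℂ) • M).PosSemidef := by
  refine PosSemidef.of_dotProduct_mulVec_nonneg ?_ (fun x => ?_)
  · unfold Matrix.IsHermitian
    rw [conjTranspose_smul, hM.1.eq]
    congr 1
    simp [Complex.ext_iff]
  · rw [smul_mulVec, dotProduct_smul]
    have := hM.dotProduct_mulVec_nonneg x
    rw [smul_eq_mul]
    exact mul_nonneg (by exact_mod_cast Complex.zero_le_real.2 hc) this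

lemma dot_self_re_nonneg (w : Fin n → ℂ) : 0 ≤ (star w ⬝ᵥ w).re := by
  simp only [dotProduct, Pi.star_apply, Complex.re_sum]
  exact Finset.sum_nonneg fun i _ => by
    rw [Complex.star_def, ← Complex.normSq_eq_conj_mul_self]
    exact Complex.normSq_nonneg _

lemma dot_self_re_pos {w : Fin n → ℂ} (hw : w ≠ 0) : 0 < (star w ⬝ᵥ w).re := by
  obtain ⟨i, hi⟩ := Function.ne_iff.mp hw
  simp only [dotProduct, Pi.star_apply, Complex.re_sum]
  refine Finset.sum_pos' (fun j _ => by
    rw [Complex.star_def, ← Complex.normSq_eq_conj_mul_self]; exact Complex.normSq_nonneg _)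
    ⟨i, Finset.mem_univ i, ?_⟩
  rw [Complex.star_def, ← Complex.normSq_eq_conj_mul_self]
  exact Complex.normSq_pos.mpr hi

lemma dot_self_ne_zero {w : Fin n → ℂ} (hw : w ≠ 0) : star w ⬝ᵥ w ≠ 0 := by
  intro h
  have := dot_self_re_pos hw
  rw [h] at this; simp at this

lemma rank_vecMulVec_self {w : Fin n → ℂ} (hw : w ≠ 0) :
    (vecMulVec w (star w)).rank = 1 := by
  have hrange : LinearMap.range (vecMulVec w (star w)).mulVecLin = Submodule.span ℂ {w} := by
    apply le_antisymm
    · rintro _ ⟨x, rfl⟩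
      rw [mulVecLin_apply, vecMulVec_mulVec]
      exact Submodule.smul_mem _ _ (Submodule.mem_span_singleton_self w)
    · rw [Submodule.span_singleton_le_iff_mem]
      refine ⟨(star w ⬝ᵥ w)⁻¹ • w, ?_⟩
      rw [mulVecLin_apply, vecMulVec_mulVec, dotProduct_smul, smul_eq_mul,
        inv_mul_cancel₀ (dot_self_ne_zero hw), one_smul]
  rw [Matrix.rank, hrange, finrank_span_singleton hw]

lemma smul_vecMulVec {c : ℝ} (hc : 0 ≤ c) (w : Fin n → ℂ) :
    (c : ℂ) • vecMulVec w (star w) =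
      vecMulVec ((Real.sqrt c : ℂ) • w) (star ((Real.sqrt c : ℂ) • w)) := by
  ext i j
  simp only [Matrix.smul_apply, vecMulVec_apply, Pi.smul_apply, Pi.star_apply, smul_eq_mul, star_mul',
    Complex.star_def, Complex.conj_ofReal]
  have : ((Real.sqrt c : ℂ)) * (Real.sqrt c : ℂ) = (c : ℂ) := by
    rw [← Complex.ofReal_mul, Real.mul_self_sqrt hc]
  calc (c : ℂ) * (w i * (starRingEnd ℂ) (w j))
      = ((Real.sqrt c : ℂ) * (Real.sqrt c : ℂ)) * (w i * (starRingEnd ℂ) (w j)) := by rw [this]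
    _ = (Real.sqrt c : ℂ) * w i * ((Real.sqrt c : ℂ) * (starRingEnd ℂ) (w j)) := by ring

lemma psd_rank_one {W : Matrix (Fin n) (Fin n) ℂ} (hW : W.PosSemidef) (hr : W.rank = 1) :
    ∃ w : Fin n → ℂ, W = vecMulVec w (star w) := by
  classical
  have hH := hW.1
  have hcard : Fintype.card {i // hH.eigenvalues i ≠ 0} = 1 := by
    rw [← hH.rank_eq_card_non_zero_eigs, hr]
  obtain ⟨⟨i₀, hi₀⟩, huniq⟩ := Fintype.card_eq_one_iff.mp hcard
  have hzero : ∀ j, j ≠ i₀ → hH.eigenvalues j = 0 := by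
    intro j hj
    by_contra hne
    exact hj (congrArg Subtype.val (huniq ⟨j, hne⟩))
  have hpos : 0 ≤ hH.eigenvalues i₀ := hW.eigenvalues_nonneg i₀
  set v : Fin n → ℂ := fun i => hH.eigenvectorBasis i₀ i with hv
  have key : W = (hH.eigenvalues i₀ : ℂ) • vecMulVec v (star v) := by
    ext i j
    have hspec := hH.spectral_theorem
    conv_lhs => rw [hspec]
    rw [Unitary.conjStarAlgAut_apply, Matrix.star_eq_conjTranspose, Matrix.mul_apply]
    simp only [Matrix.mul_diagonal, conjTranspose_apply, Function.comp,
      IsHermitian.eigenvectorUnitary_apply]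
    rw [Finset.sum_eq_single i₀]
    · simp only [Matrix.smul_apply, vecMulVec_apply, smul_eq_mul, hv, Pi.star_apply,
        Matrix.star_apply, IsHermitian.eigenvectorUnitary_apply,
        show (RCLike.ofReal : ℝ → ℂ) = Complex.ofReal from rfl]
      ring
    · intro k _ hk
      rw [hzero k hk]
      simp
    · intro hmem
      exact absurd (Finset.mem_univ i₀) hmem
  rw [key, smul_vecMulVec hpos]
  exact ⟨_, rfl⟩

lemma re_nonneg_of_psd {M : Matrix (Fin n) (Fin n) ℂ} (hM : M.PosSemidef)
    (x : Fin n → ℂ) : 0 ≤ (star x ⬝ᵥ M *ᵥ x).re := by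
  have := hM.dotProduct_mulVec_nonneg x
  rw [Complex.le_def] at this
  simpa using this.1

lemma trace_re_nonneg {M : Matrix (Fin n) (Fin n) ℂ} (hM : M.PosSemidef) :
    0 ≤ M.trace.re := by
  rw [trace, Complex.re_sum]
  refine Finset.sum_nonneg fun i _ => ?_
  have h := re_nonneg_of_psd hM (Pi.single i 1)
  simpa [dotProduct, mulVec, Pi.single_apply, Finset.sum_ite_eq, diag] using h

lemma smul_trace_re (c : ℝ) (M : Matrix (Fin n) (Fin n) ℂ) :
    ((c : ℂ) • M).trace.re = c * M.trace.re := by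
  rw [trace_smul, smul_eq_mul, Complex.re_ofReal_mul]

lemma smul_quad_re (c : ℝ) (M : Matrix (Fin n) (Fin n) ℂ) (g : Fin n → ℂ) :
    (star g ⬝ᵥ ((c : ℂ) • M) *ᵥ g).re = c * (star g ⬝ᵥ M *ᵥ g).re := by
  rw [smul_mulVec, dotProduct_smul, smul_eq_mul, Complex.re_ofReal_mul]

lemma mul_smul_trace_re (H : Matrix (Fin n) (Fin n) ℂ) (c : ℝ)
    (M : Matrix (Fin n) (Fin n) ℂ) :
    (H * ((c : ℂ) • M)).trace.re = c * (H * M).trace.re := by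
  rw [Matrix.mul_smul, trace_smul, smul_eq_mul, Complex.re_ofReal_mul]

lemma trace_mul_quad (h w : Fin n → ℂ) :
    (vecMulVec h (star h) * vecMulVec w (star w)).trace
      = star w ⬝ᵥ (vecMulVec h (star h)) *ᵥ w := by
  rw [trace_vecMulVec_mul, quad_vecMulVec w h, quad_vecMulVec h w, star_dotProduct w h,
    star_star]
  ring

end CCaux

open CCaux in
private lemma power_min_forward {NT K J : ℕ} (h : Fin NT → ℂ)
    (ghat : Fin (K - 1) → Fin NT → ℂ) (lhat : Fin J → Fin NT → ℂ)
    (Γreq σz2 Pmax σPU2 : ℝ) (Γtol σzk2 ε : Fin (K - 1) → ℝ) (ΓtolPU υ : Fin J → ℝ)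
    (hΓreq : 0 < Γreq) (hσz : 0 < σz2)
    (w : Fin NT → ℂ) (V : Matrix (Fin NT) (Fin NT) ℂ)
    (hF : FeasOrig h ghat lhat Γreq σz2 Pmax σPU2 Γtol σzk2 ε ΓtolPU υ w V) :
    0 < (star w ⬝ᵥ w).re + V.trace.re ∧
    FeasTrans h ghat lhat Γreq σz2 Pmax σPU2 Γtol σzk2 ε ΓtolPU υ
      ((((star w ⬝ᵥ w).re + V.trace.re)⁻¹ : ℂ) • Matrix.vecMulVec w (star w))
      ((((star w ⬝ᵥ w).re + V.trace.re)⁻¹ : ℂ) • V)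
      (((star w ⬝ᵥ w).re + V.trace.re)⁻¹) ∧
    1 / (((star w ⬝ᵥ w).re + V.trace.re)⁻¹) = (star w ⬝ᵥ w).re + V.trace.re := by
  obtain ⟨hV, hC1, hC2, hC3, hC4⟩ := hF
  have hTV : 0 ≤ (Matrix.vecMulVec h (star h) * V).trace.re := by
    rw [trace_vecMulVec_mul]
    exact re_nonneg_of_psd hV h
  have hq : 0 < (star w ⬝ᵥ Matrix.vecMulVec h (star h) *ᵥ w).re :=
    lt_of_lt_of_le (by nlinarith) hC1
  have hw : w ≠ 0 := by
    rintro rfl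
    simp at hq
  have hPpos : 0 < (star w ⬝ᵥ w).re + V.trace.re := by
    have h1 := dot_self_re_pos hw
    have h2 := trace_re_nonneg hV
    linarith
  have hPne : (star w ⬝ᵥ w).re + V.trace.re ≠ 0 := hPpos.ne'
  have hc : 0 ≤ ((star w ⬝ᵥ w).re + V.trace.re)⁻¹ := inv_nonneg.mpr hPpos.le
  have hcast : ((((star w ⬝ᵥ w).re + V.trace.re) : ℂ))⁻¹
      = (((((star w ⬝ᵥ w).re + V.trace.re)⁻¹ : ℝ)) : ℂ) := by push_cast; ring
  refine ⟨hPpos, ?_, ?_⟩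
  · rw [hcast]
    refine ⟨smul_posSemidef hc (posSemidef_vecMulVec w), smul_posSemidef hc hV, hc, ?_,
      ?_, ?_, ?_, ?_, ?_⟩
    · rw [smul_vecMulVec hc]
      refine rank_vecMulVec_self (smul_ne_zero ?_ hw)
      simp only [ne_eq, Complex.ofReal_eq_zero]
      positivity
    · rw [mul_smul_trace_re, mul_smul_trace_re, trace_mul_quad]
      have key := mul_le_mul_of_nonneg_left hC1 hc
      nlinarith [key]
    · intro k Δg hΔ
      rw [smul_quad_re, smul_quad_re, quad_vecMulVec_re]
      have key := mul_le_mul_of_nonneg_left (hC2 k Δg hΔ) hc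
      nlinarith [key]
    · intro j Δl hΔ
      rw [smul_quad_re, smul_quad_re, quad_vecMulVec_re]
      have key := mul_le_mul_of_nonneg_left (hC3 j Δl hΔ) hc
      nlinarith [key]
    · rw [smul_trace_re, smul_trace_re, trace_vecMulVec]
      have key := mul_le_mul_of_nonneg_left hC4 hc
      have hone : ((star w ⬝ᵥ w).re + V.trace.re)⁻¹ * ((star w ⬝ᵥ w).re + V.trace.re) = 1 :=
        inv_mul_cancel₀ hPne
      nlinarith [key, hone]
    · rw [smul_trace_re, smul_trace_re, trace_vecMulVec]
      have hone : ((star w ⬝ᵥ w).re + V.trace.re)⁻¹ * ((star w ⬝ᵥ w).re + V.trace.re) = 1 :=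
        inv_mul_cancel₀ hPne
      nlinarith [hone]
  · rw [one_div, inv_inv]

open CCaux in
private lemma power_min_backward {NT K J : ℕ} (h : Fin NT → ℂ)
    (ghat : Fin (K - 1) → Fin NT → ℂ) (lhat : Fin J → Fin NT → ℂ)
    (Γreq σz2 Pmax σPU2 : ℝ) (Γtol σzk2 ε : Fin (K - 1) → ℝ) (ΓtolPU υ : Fin J → ℝ)
    (hPmax : 0 < Pmax)
    (Wb Vb : Matrix (Fin NT) (Fin NT) ℂ) (ξ : ℝ)
    (hT : FeasTrans h ghat lhat Γreq σz2 Pmax σPU2 Γtol σzk2 ε ΓtolPU υ Wb Vb ξ) :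
    0 < ξ ∧
    ∃ wbar : Fin NT → ℂ,
      ((ξ : ℂ)⁻¹ • Wb) = Matrix.vecMulVec wbar (star wbar) ∧
      FeasOrig h ghat lhat Γreq σz2 Pmax σPU2 Γtol σzk2 ε ΓtolPU υ wbar ((ξ : ℂ)⁻¹ • Vb) ∧
      (star wbar ⬝ᵥ wbar).re + ((ξ : ℂ)⁻¹ • Vb).trace.re = 1 / ξ := by
  obtain ⟨hWb, hVb, hξ0, hrank, hC1, hC2, hC3, hPow, hNorm⟩ := hT
  have hξ : 0 < ξ := by nlinarith
  have hc : 0 ≤ ξ⁻¹ := inv_nonneg.mpr hξ.le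
  have hcξ : ξ⁻¹ * ξ = 1 := inv_mul_cancel₀ hξ.ne'
  have hcast : ((ξ : ℂ))⁻¹ = (((ξ⁻¹ : ℝ)) : ℂ) := (Complex.ofReal_inv _).symm
  obtain ⟨u, hu⟩ := psd_rank_one hWb hrank
  refine ⟨hξ, (Real.sqrt ξ⁻¹ : ℂ) • u, ?_, ?_, ?_⟩
  · rw [hcast, hu, smul_vecMulVec hc]
  · refine ⟨?_, ?_, ?_, ?_, ?_⟩
    · rw [hcast]; exact smul_posSemidef hc hVb
    · -- C1
      rw [← trace_mul_quad, ← smul_vecMulVec hc, ← hu, mul_smul_trace_re,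
        hcast, mul_smul_trace_re]
      have key := mul_le_mul_of_nonneg_left hC1 hc
      have e := congrArg (fun t => Γreq * σz2 * t) hcξ
      simp only [mul_one] at e
      linarith [key, e]
    · -- C2
      intro k Δg hΔ
      rw [← quad_vecMulVec_re, ← smul_vecMulVec hc, ← hu, smul_quad_re,
        hcast, smul_quad_re]
      have key := mul_le_mul_of_nonneg_left (hC2 k Δg hΔ) hc
      have e := congrArg (fun t => Γtol k * σzk2 k * t) hcξ
      simp only [mul_one] at e
      linarith [key, e]
    · -- C3
      intro j Δl hΔ
      rw [← quad_vecMulVec_re, ← smul_vecMulVec hc, ← hu, smul_quad_re,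
        hcast, smul_quad_re]
      have key := mul_le_mul_of_nonneg_left (hC3 j Δl hΔ) hc
      have e := congrArg (fun t => ΓtolPU j * σPU2 * t) hcξ
      simp only [mul_one] at e
      linarith [key, e]
    · -- power
      rw [← trace_vecMulVec, ← smul_vecMulVec hc, ← hu, smul_trace_re,
        hcast, smul_trace_re]
      have e1 := congrArg (fun t => ξ⁻¹ * t) hNorm
      have e2 := mul_le_mul_of_nonneg_left hPow hc
      have e3 := congrArg (fun t => Pmax * t) hcξ
      simp only [mul_one] at e1 e3
      linarith [e1, e2, e3]
  · rw [← trace_vecMulVec, ← smul_vecMulVec hc, ← hu, smul_trace_re,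
      hcast, smul_trace_re, one_div]
    have e1 := congrArg (fun t => ξ⁻¹ * t) hNorm
    simp only [mul_one] at e1
    linarith [e1]

/-- Equivalence of the transmit power minimization problem and its Charnes–Cooper
transformed version: the optimal values coincide, every feasible `(w,V)` yields a feasible
transformed point with the same objective, and every feasible transformed point yields a
feasible original point with the same objective. -/
theorem power_min_equiv {NT K J : ℕ} (hNT : 1 ≤ NT) (h : Fin NT → ℂ)
    (ghat : Fin (K - 1) → Fin NT → ℂ) (lhat : Fin J → Fin NT → ℂ)
    (Γreq σz2 Pmax σPU2 : ℝ) (Γtol σzk2 ε : Fin (K - 1) → ℝ) (ΓtolPU υ : Fin J → ℝ)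
    (hΓreq : 0 < Γreq) (hσz : 0 < σz2) (hPmax : 0 < Pmax) (hσPU : 0 < σPU2)
    (hΓtol : ∀ k, 0 < Γtol k) (hσzk : ∀ k, 0 < σzk2 k) (hε : ∀ k, 0 < ε k)
    (hΓPU : ∀ j, 0 < ΓtolPU j) (hυ : ∀ j, 0 < υ j) :
    (sInf {t : ℝ | ∃ w V, FeasOrig h ghat lhat Γreq σz2 Pmax σPU2 Γtol σzk2 ε ΓtolPU υ w V ∧
          t = (star w ⬝ᵥ w).re + V.trace.re} =
      sInf {t : ℝ | ∃ Wb Vb ξ,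
          FeasTrans h ghat lhat Γreq σz2 Pmax σPU2 Γtol σzk2 ε ΓtolPU υ Wb Vb ξ ∧
          t = 1 / ξ}) ∧
    (∀ w V, FeasOrig h ghat lhat Γreq σz2 Pmax σPU2 Γtol σzk2 ε ΓtolPU υ w V →
        0 < (star w ⬝ᵥ w).re + V.trace.re ∧
        FeasTrans h ghat lhat Γreq σz2 Pmax σPU2 Γtol σzk2 ε ΓtolPU υ
          ((((star w ⬝ᵥ w).re + V.trace.re)⁻¹ : ℂ) • Matrix.vecMulVec w (star w))
          ((((star w ⬝ᵥ w).re + V.trace.re)⁻¹ : ℂ) • V)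
          (((star w ⬝ᵥ w).re + V.trace.re)⁻¹) ∧
        1 / (((star w ⬝ᵥ w).re + V.trace.re)⁻¹) = (star w ⬝ᵥ w).re + V.trace.re) ∧
    (∀ Wb Vb ξ, FeasTrans h ghat lhat Γreq σz2 Pmax σPU2 Γtol σzk2 ε ΓtolPU υ Wb Vb ξ →
        0 < ξ ∧
        ∃ wbar : Fin NT → ℂ,
          ((ξ : ℂ)⁻¹ • Wb) = Matrix.vecMulVec wbar (star wbar) ∧
          FeasOrig h ghat lhat Γreq σz2 Pmax σPU2 Γtol σzk2 ε ΓtolPU υ wbar ((ξ : ℂ)⁻¹ • Vb) ∧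
          (star wbar ⬝ᵥ wbar).re + ((ξ : ℂ)⁻¹ • Vb).trace.re = 1 / ξ) := by
  refine ⟨?_,
    fun w V hF => power_min_forward h ghat lhat Γreq σz2 Pmax σPU2 Γtol σzk2 ε ΓtolPU υ
      hΓreq hσz w V hF,
    fun Wb Vb ξ hT => power_min_backward h ghat lhat Γreq σz2 Pmax σPU2 Γtol σzk2 ε ΓtolPU υ
      hPmax Wb Vb ξ hT⟩
  congr 1
  ext t
  constructor
  · rintro ⟨w, V, hF, rfl⟩
    obtain ⟨hP, hFT, hobj⟩ := power_min_forward h ghat lhat Γreq σz2 Pmax σPU2 Γtol σzk2 ε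
      ΓtolPU υ hΓreq hσz w V hF
    exact ⟨_, _, _, hFT, hobj.symm⟩
  · rintro ⟨Wb, Vb, ξ, hFT, rfl⟩
    obtain ⟨hξ, wbar, hdec, hF, hobj⟩ := power_min_backward h ghat lhat Γreq σz2 Pmax σPU2
      Γtol σzk2 ε ΓtolPU υ hPmax Wb Vb ξ hFT
    exact ⟨wbar, _, hF, hobj.symm⟩
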